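/- The Glauber dynamics Markov chain on proper 3-colourings of Q_d is irreducible: any proper 3-colouring of Q_d can be transformed into any other by a sequence of single-vertex colour changes, each intermediate step being a proper 3-colouring. -/

import Mathlib

/-- The `d`-dimensional hypercube graph. -/
def hypercube (d : ℕ) : SimpleGraph (Fin d → Bool) where
  Adj x y := ∃! i, x i ≠ y i
  symm := by
    constructor
    rintro x y ⟨i, hi, hu⟩
    exact ⟨i, Ne.symm hi, fun j hj => hu j (Ne.symm hj)⟩
  loopless := by
    constructor
    rintro x ⟨i, hi, -⟩
    exact hi rfl

/-- A colouring is proper on `Q_d`. -/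
def ProperCol (d : ℕ) (χ : (Fin d → Bool) → Fin 3) : Prop :=
  ∀ x y, (hypercube d).Adj x y → χ x ≠ χ y

/-- One step of Glauber dynamics: change the colour of at most one vertex,
remaining a proper colouring. -/
def GlauberStep (d : ℕ) (χ₁ χ₂ : (Fin d → Bool) → Fin 3) : Prop :=
  ProperCol d χ₁ ∧ ProperCol d χ₂ ∧ ∃ v, ∀ w, w ≠ v → χ₁ w = χ₂ w

namespace Glauber

variable {d : ℕ}

open Fin.CommRing

abbrev V (d : ℕ) := Fin d → Bool

lemma adj_update (x : V d) (i : Fin d) (b : Bool) (h : x i ≠ b) :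
    (hypercube d).Adj x (Function.update x i b) := by
  refine ⟨i, ?_, ?_⟩
  · simpa using h
  · intro j hj
    by_contra hji
    exact hj (by rw [Function.update_of_ne hji])

lemma adj_elim {x y : V d} (h : (hypercube d).Adj x y) :
    ∃ i, x i ≠ y i ∧ ∀ j, j ≠ i → x j = y j := by
  obtain ⟨i, hi, hu⟩ := h
  exact ⟨i, hi, fun j hj => by
    by_contra hne
    exact hj (hu j hne)⟩

def trueSet (x : V d) : Finset (Fin d) := Finset.univ.filter (fun i => x i = true)

def wt (x : V d) : ℕ := (trueSet x).card

def zeroV (d : ℕ) : V d := fun _ => false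

lemma trueSet_nonempty {x : V d} (hx : x ≠ zeroV d) : (trueSet x).Nonempty := by
  rw [trueSet, Finset.filter_nonempty_iff]
  by_contra h
  push_neg at h
  apply hx
  funext i
  have := h i (Finset.mem_univ i)
  simp only [zeroV]
  simpa using this

lemma trueSet_update_false (x : V d) (i : Fin d) :
    trueSet (Function.update x i false) = (trueSet x).erase i := by
  ext j
  rcases eq_or_ne j i with rfl | hj
  · simp [trueSet]
  · simp [trueSet, Function.update_of_ne hj, hj]

lemma wt_update_false {x : V d} {i : Fin d} (hi : x i = true) :
    wt (Function.update x i false) + 1 = wt x := by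
  rw [wt, wt, trueSet_update_false]
  exact Finset.card_erase_add_one (by simp [trueSet, hi])

lemma wt_zero : wt (zeroV d) = 0 := by
  simp [wt, trueSet, zeroV]

lemma update_false_true {x : V d} {i : Fin d} (hi : x i = true) :
    Function.update (Function.update x i false) i true = x := by
  funext w
  rcases eq_or_ne w i with rfl | hwi
  · rw [Function.update_self, hi]
  · rw [Function.update_of_ne hwi, Function.update_of_ne hwi]

lemma adj_off {x : V d} {i : Fin d} (hi : x i = true) :
    (hypercube d).Adj (Function.update x i false) x := by
  have h := adj_update (Function.update x i false) i true (by simp)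
  rwa [update_false_true hi] at h

/-- adjacent vertices: one is obtained from the other by switching off a true
coordinate. -/
lemma adj_cases {x y : V d} (h : (hypercube d).Adj x y) :
    (∃ j, x j = true ∧ y = Function.update x j false) ∨
    (∃ j, y j = true ∧ x = Function.update y j false) := by
  obtain ⟨i, hi, hrest⟩ := adj_elim h
  cases hx : x i with
  | true =>
    left
    have hy : y i = false := by
      cases hyy : y i
      · rfl
      · exact absurd (hx.trans hyy.symm) hi
    refine ⟨i, hx, ?_⟩
    funext w
    rcases eq_or_ne w i with rfl | hwi
    · rw [Function.update_self, hy]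
    · rw [Function.update_of_ne hwi]; exact (hrest w hwi).symm
  | false =>
    right
    have hy : y i = true := by
      cases hyy : y i
      · exact absurd (hx.trans hyy.symm) hi
      · rfl
    refine ⟨i, hy, ?_⟩
    funext w
    rcases eq_or_ne w i with rfl | hwi
    · rw [Function.update_self, hx]
    · rw [Function.update_of_ne hwi]; exact hrest w hwi

lemma adj_wt {x y : V d} (h : (hypercube d).Adj x y) :
    wt y + 1 = wt x ∨ wt x + 1 = wt y := by
  rcases adj_cases h with ⟨j, hj, rfl⟩ | ⟨j, hj, rfl⟩
  · exact Or.inl (wt_update_false hj)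
  · exact Or.inr (wt_update_false hj)

lemma adj_down {x y : V d} (h : (hypercube d).Adj x y) (hw : wt y + 1 = wt x) :
    ∃ j, x j = true ∧ y = Function.update x j false := by
  rcases adj_cases h with hc | ⟨j, hj, rfl⟩
  · exact hc
  · have := wt_update_false hj
    omega

def eps (a b : Fin 3) : ℤ := if b = a + 1 then 1 else -1

lemma eps_val (a b : Fin 3) : eps a b = 1 ∨ eps a b = -1 := by unfold eps; split <;> simp

lemma eps_cast (a b : Fin 3) (h : a ≠ b) : ((eps a b : ℤ) : Fin 3) = b - a := by
  fin_cases a <;> fin_cases b <;> simp_all [eps] <;> decide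

lemma square (a b c e : Fin 3) (hab : a ≠ b) (hbc : b ≠ c) (hae : a ≠ e) (hec : e ≠ c) :
    eps a b + eps b c = eps a e + eps e c := by
  fin_cases a <;> fin_cases b <;> fin_cases c <;> fin_cases e <;> simp_all [eps]

def ht (χ : V d → Fin 3) (x : V d) : ℤ :=
  if hx : x = zeroV d then ((χ x).val : ℤ)
  else
    let i := (trueSet x).min' (trueSet_nonempty hx)
    ht χ (Function.update x i false) + eps (χ (Function.update x i false)) (χ x)
termination_by wt x
decreasing_by
  have hi : x ((trueSet x).min' (trueSet_nonempty hx)) = true := by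
    have := (trueSet x).min'_mem (trueSet_nonempty hx)
    simpa [trueSet] using this
  have := wt_update_false hi
  omega

lemma ht_zero (χ : V d → Fin 3) : ht χ (zeroV d) = ((χ (zeroV d)).val : ℤ) := by
  rw [ht]; simp

lemma ht_step (χ : V d → Fin 3) (x : V d) (hx : x ≠ zeroV d) :
    ht χ x = ht χ (Function.update x ((trueSet x).min' (trueSet_nonempty hx)) false)
      + eps (χ (Function.update x ((trueSet x).min' (trueSet_nonempty hx)) false)) (χ x) := by
  conv_lhs => rw [ht]
  simp [hx]

lemma ht_lower (χ : V d → Fin 3) (hχ : ProperCol d χ) :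
    ∀ n (x y : V d), wt x = n → (hypercube d).Adj x y → wt y + 1 = wt x →
      ht χ x = ht χ y + eps (χ y) (χ x) := by
  intro n
  induction n using Nat.strong_induction_on with
  | _ n IH =>
    intro x y hn hadj hw
    have hx0 : x ≠ zeroV d := by
      intro h; rw [h, wt_zero] at hw; omega
    have hi₀ : x ((trueSet x).min' (trueSet_nonempty hx0)) = true := by
      have := (trueSet x).min'_mem (trueSet_nonempty hx0)
      simpa [trueSet] using this
    set i₀ := (trueSet x).min' (trueSet_nonempty hx0) with hi₀def
    have hstep : ht χ x = ht χ (Function.update x i₀ false)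
        + eps (χ (Function.update x i₀ false)) (χ x) := ht_step χ x hx0
    set x' := Function.update x i₀ false with hx'def
    obtain ⟨j, hj, hyeq⟩ := adj_down hadj hw
    rcases eq_or_ne j i₀ with rfl | hji
    · rw [hstep, hyeq, hx'def]
    · set z := Function.update x' j false with hzdef
      have hx'j : x' j = true := by
        rw [hx'def, Function.update_of_ne hji, hj]
      have hyi₀ : y i₀ = true := by
        rw [hyeq, Function.update_of_ne (Ne.symm hji), hi₀]
      have hzy : z = Function.update y i₀ false := by
        funext w
        rcases eq_or_ne w j with rfl | hwj
        · rw [hzdef, Function.update_self, hyeq, Function.update_of_ne hji,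
            Function.update_self]
        · rcases eq_or_ne w i₀ with rfl | hwi
          · rw [hzdef, Function.update_of_ne (Ne.symm hji), hx'def, Function.update_self,
              Function.update_self]
          · rw [hzdef, Function.update_of_ne hwj, hx'def, Function.update_of_ne hwi,
              hyeq, Function.update_of_ne hwi, Function.update_of_ne hwj]
      have hwx' : wt x' + 1 = wt x := by rw [hx'def]; exact wt_update_false hi₀
      have hwz : wt z + 1 = wt x' := by rw [hzdef]; exact wt_update_false hx'j
      have hwzy : wt z + 1 = wt y := by
        have h1 := wt_update_false hyi₀
        rw [← hzy] at h1
        have h2 := wt_update_false hj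
        rw [← hyeq] at h2
        omega
      have hax'x : (hypercube d).Adj x' x := by rw [hx'def]; exact adj_off hi₀
      have hazx' : (hypercube d).Adj x' z := by
        rw [hzdef]; exact adj_update x' j false (by rw [hx'j]; simp)
      have hazy : (hypercube d).Adj y z := by
        rw [hzy]; exact adj_update y i₀ false (by rw [hyi₀]; simp)
      have hayx : (hypercube d).Adj y x := hadj.symm
      have ihx' : ht χ x' = ht χ z + eps (χ z) (χ x') :=
        IH (wt x') (by omega) x' z rfl hazx' (by omega)
      have ihy : ht χ y = ht χ z + eps (χ z) (χ y) :=
        IH (wt y) (by omega) y z rfl hazy (by omega)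
      rw [hstep, ihx', ihy]
      have hsq : eps (χ z) (χ x') + eps (χ x') (χ x)
          = eps (χ z) (χ y) + eps (χ y) (χ x) := by
        apply square
        · exact fun h => hχ x' z hazx' h.symm
        · exact hχ x' x hax'x
        · exact fun h => hχ y z hazy h.symm
        · exact hχ y x hayx
      omega

def IsHt (h : V d → ℤ) : Prop :=
  ∀ x y, (hypercube d).Adj x y → h y = h x + 1 ∨ h y = h x - 1

def colh (h : V d → ℤ) : V d → Fin 3 := fun x => ((h x : ℤ) : Fin 3)

lemma colh_proper {h : V d → ℤ} (hh : IsHt h) : ProperCol d (colh h) := by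
  have key : ∀ a : Fin 3, a + 1 ≠ a ∧ a - 1 ≠ a := by decide
  intro x y hxy
  intro heq
  rcases hh x y hxy with h1 | h1
  · rw [colh, colh, h1] at heq
    push_cast at heq
    exact (key _).1 heq.symm
  · rw [colh, colh, h1] at heq
    push_cast at heq
    exact (key _).2 heq.symm

lemma isHt_ht (χ : V d → Fin 3) (hχ : ProperCol d χ) : IsHt (ht χ) := by
  intro x y hxy
  rcases adj_wt hxy with hw | hw
  · have := ht_lower χ hχ (wt x) x y rfl hxy hw
    rcases eps_val (χ y) (χ x) with h1 | h1 <;> rw [h1] at this <;> omega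
  · have := ht_lower χ hχ (wt y) y x rfl hxy.symm hw
    rcases eps_val (χ x) (χ y) with h1 | h1 <;> rw [h1] at this <;> omega

lemma colh_ht (χ : V d → Fin 3) (hχ : ProperCol d χ) : colh (ht χ) = χ := by
  have key : ∀ n (x : V d), wt x = n → colh (ht χ) x = χ x := by
    intro n
    induction n using Nat.strong_induction_on with
    | _ n IH =>
      intro x hn
      rcases eq_or_ne x (zeroV d) with rfl | hx0
      · rw [colh]
        simp only [ht_zero]
        push_cast
        simp [Fin.cast_val_eq_self]
      · have hi₀ : x ((trueSet x).min' (trueSet_nonempty hx0)) = true := by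
          have := (trueSet x).min'_mem (trueSet_nonempty hx0)
          simpa [trueSet] using this
        set i₀ := (trueSet x).min' (trueSet_nonempty hx0) with hi₀def
        have hstep : ht χ x = ht χ (Function.update x i₀ false)
            + eps (χ (Function.update x i₀ false)) (χ x) := ht_step χ x hx0
        set x' := Function.update x i₀ false with hx'def
        have hadj : (hypercube d).Adj x' x := by rw [hx'def]; exact adj_off hi₀
        have hwx' : wt x' + 1 = wt x := by rw [hx'def]; exact wt_update_false hi₀
        have ihx' : colh (ht χ) x' = χ x' := IH (wt x') (by omega) x' rfl
        have hne : χ x' ≠ χ x := hχ x' x hadj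
        rw [colh] at ihx' ⊢
        simp only [hstep]
        push_cast
        rw [eps_cast _ _ hne, ihx']
        ring
  funext x
  exact key (wt x) x rfl


/-! ### parity of heights -/

lemma ht_parity (h : V d → ℤ) (hh : IsHt h) :
    ∀ n (x : V d), wt x = n → (2:ℤ) ∣ (h x - h (zeroV d) - wt x) := by
  intro n
  induction n using Nat.strong_induction_on with
  | _ n IH =>
    intro x hn
    rcases eq_or_ne x (zeroV d) with rfl | hx0
    · rw [wt_zero]; simp
    · have hi₀ : x ((trueSet x).min' (trueSet_nonempty hx0)) = true := by
        have := (trueSet x).min'_mem (trueSet_nonempty hx0)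
        simpa [trueSet] using this
      set i₀ := (trueSet x).min' (trueSet_nonempty hx0) with hi₀def
      set x' := Function.update x i₀ false with hx'def
      have hadj : (hypercube d).Adj x' x := by rw [hx'def]; exact adj_off hi₀
      have hwx' : wt x' + 1 = wt x := by rw [hx'def]; exact wt_update_false hi₀
      have ih := IH (wt x') (by omega) x' rfl
      have hstep := hh x' x hadj
      have hcast : (wt x : ℤ) = (wt x' : ℤ) + 1 := by exact_mod_cast hwx'.symm
      rcases hstep with h1 | h1 <;> rw [h1, hcast] <;> omega

/-! ### two-colourings -/

def twoCol (a b : Fin 3) : V d → Fin 3 := fun x => if Even (wt x) then a else b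

lemma adj_parity {x y : V d} (h : (hypercube d).Adj x y) :
    Even (wt x) ↔ ¬ Even (wt y) := by
  rcases adj_wt h with hw | hw
  · have : wt x = wt y + 1 := by omega
    rw [this, Nat.even_add_one]
  · have : wt y = wt x + 1 := by omega
    rw [this, Nat.even_add_one]
    tauto

lemma colh_twoCol (h : V d → ℤ) (hh : IsHt h) (m : ℤ)
    (hval : ∀ x, h x = m ∨ h x = m + 1) :
    ∃ a b : Fin 3, a ≠ b ∧ colh h = twoCol a b := by
  have keyne : ∀ a : Fin 3, a ≠ a + 1 := by decide
  refine ⟨((h (zeroV d) : ℤ) : Fin 3), ((2*m + 1 - h (zeroV d) : ℤ) : Fin 3), ?_, ?_⟩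
  · rcases hval (zeroV d) with h0 | h0 <;> rw [h0]
    · have e : (2*m + 1 - m : ℤ) = m + 1 := by ring
      rw [e]
      push_cast
      exact keyne _
    · have e : (2*m + 1 - (m+1) : ℤ) = m := by ring
      rw [e]
      intro he
      push_cast at he
      exact keyne _ he.symm
  · funext x
    have hp := ht_parity h hh (wt x) x rfl
    rw [colh, twoCol]
    by_cases hx : Even (wt x)
    · rw [if_pos hx]
      obtain ⟨k, hk⟩ := hx
      rw [hk] at hp
      push_cast at hp
      have : h x = h (zeroV d) := by
        rcases hval x with h1 | h1 <;> rcases hval (zeroV d) with h2 | h2 <;> omega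
      rw [this]
    · rw [if_neg hx]
      rw [Nat.not_even_iff_odd] at hx
      obtain ⟨k, hk⟩ := hx
      rw [hk] at hp
      push_cast at hp
      have : h x = 2*m + 1 - h (zeroV d) := by
        rcases hval x with h1 | h1 <;> rcases hval (zeroV d) with h2 | h2 <;> omega
      rw [this]

lemma twoCol_proper {a b : Fin 3} (hab : a ≠ b) : ProperCol d (twoCol a b) := by
  intro x y hxy
  simp only [twoCol]
  have hpar := adj_parity hxy
  by_cases hx : Even (wt x)
  · have hy : ¬ Even (wt y) := by tauto
    rw [if_pos hx, if_neg hy]; exact hab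
  · have hy : Even (wt y) := by tauto
    rw [if_neg hx, if_pos hy]; exact hab.symm

lemma twoCol_even (a b a' : Fin 3) (hab : a ≠ b) (ha'b : a' ≠ b) :
    Relation.ReflTransGen (GlauberStep d) (twoCol a b) (twoCol a' b) := by
  classical
  set mix : Finset (V d) → V d → Fin 3 :=
    fun S x => if Even (wt x) then (if x ∈ S then a' else a) else b with hmixdef
  have hproper : ∀ S, ProperCol d (mix S) := by
    intro S x y hxy
    have hpar := adj_parity hxy
    rw [hmixdef]
    simp only
    by_cases hx : Even (wt x)
    · have hy : ¬ Even (wt y) := by tauto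
      rw [if_pos hx, if_neg hy]
      by_cases hxS : x ∈ S
      · rw [if_pos hxS]; exact ha'b
      · rw [if_neg hxS]; exact hab
    · have hy : Even (wt y) := by tauto
      rw [if_neg hx, if_pos hy]
      by_cases hyS : y ∈ S
      · rw [if_pos hyS]; exact ha'b.symm
      · rw [if_neg hyS]; exact hab.symm
  have hchain : ∀ S : Finset (V d),
      Relation.ReflTransGen (GlauberStep d) (twoCol a b) (mix S) := by
    intro S
    induction S using Finset.induction_on with
    | empty =>
      have he : mix ∅ = twoCol a b := by
        funext x
        rw [hmixdef]
        simp only [Finset.notMem_empty, if_false, twoCol]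
      rw [he]
    | @insert a₀ S ha₀ IH =>
      refine IH.tail ⟨hproper S, hproper _, a₀, fun w hw => ?_⟩
      rw [hmixdef]
      simp only [Finset.mem_insert, hw, false_or]
  have hfinal : mix Finset.univ = twoCol a' b := by
    funext x
    rw [hmixdef]
    simp only [Finset.mem_univ, if_true, twoCol]
  rw [← hfinal]
  exact hchain Finset.univ

lemma twoCol_odd (a b b' : Fin 3) (hab : a ≠ b) (hab' : a ≠ b') :
    Relation.ReflTransGen (GlauberStep d) (twoCol a b) (twoCol a b') := by
  classical
  set mix : Finset (V d) → V d → Fin 3 :=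
    fun S x => if Even (wt x) then a else (if x ∈ S then b' else b) with hmixdef
  have hproper : ∀ S, ProperCol d (mix S) := by
    intro S x y hxy
    have hpar := adj_parity hxy
    rw [hmixdef]
    simp only
    by_cases hx : Even (wt x)
    · have hy : ¬ Even (wt y) := by tauto
      rw [if_pos hx, if_neg hy]
      by_cases hyS : y ∈ S
      · rw [if_pos hyS]; exact hab'
      · rw [if_neg hyS]; exact hab
    · have hy : Even (wt y) := by tauto
      rw [if_neg hx, if_pos hy]
      by_cases hxS : x ∈ S
      · rw [if_pos hxS]; exact hab'.symm
      · rw [if_neg hxS]; exact hab.symm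
  have hchain : ∀ S : Finset (V d),
      Relation.ReflTransGen (GlauberStep d) (twoCol a b) (mix S) := by
    intro S
    induction S using Finset.induction_on with
    | empty =>
      have he : mix ∅ = twoCol a b := by
        funext x
        rw [hmixdef]
        simp only [Finset.notMem_empty, if_false, twoCol]
      rw [he]
    | @insert a₀ S ha₀ IH =>
      refine IH.tail ⟨hproper S, hproper _, a₀, fun w hw => ?_⟩
      rw [hmixdef]
      simp only [Finset.mem_insert, hw, false_or]
  have hfinal : mix Finset.univ = twoCol a b' := by
    funext x
    rw [hmixdef]
    simp only [Finset.mem_univ, if_true, twoCol]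
  rw [← hfinal]
  exact hchain Finset.univ

lemma twoCol_connect (a b a' b' : Fin 3) (hab : a ≠ b) (ha'b' : a' ≠ b') :
    Relation.ReflTransGen (GlauberStep d) (twoCol a b) (twoCol a' b') := by
  have third : ∀ a b : Fin 3, ∃ c, c ≠ a ∧ c ≠ b := by decide
  by_cases h1 : a' = b
  · by_cases h2 : b' = a
    · obtain ⟨c, hca, hcb⟩ := third a b
      have s1 := twoCol_even (d := d) a b c hab hcb
      have s2 := twoCol_odd (d := d) c b a hcb hca
      have s3 := twoCol_even (d := d) c a b hca (Ne.symm hab)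
      rw [h1, h2]
      exact (s1.trans s2).trans s3
    · have hb'a : b' ≠ a := h2
      have s1 := twoCol_odd (d := d) a b b' hab (Ne.symm hb'a)
      have s2 := twoCol_even (d := d) a b' a' (Ne.symm hb'a) ha'b'
      exact s1.trans s2
  · have s1 := twoCol_even (d := d) a b a' hab h1
    have s2 := twoCol_odd (d := d) a' b b' h1 ha'b'
    exact s1.trans s2

/-! ### lowering the maximum -/

lemma lower_chain (h : V d → ℤ) (hh : IsHt h) (M : ℤ) (hM : ∀ x, h x ≤ M) :
    ∀ S : Finset (V d), (∀ x ∈ S, h x = M) →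
      IsHt (fun x => if x ∈ S then h x - 2 else h x) ∧
      Relation.ReflTransGen (GlauberStep d) (colh h)
        (colh (fun x => if x ∈ S then h x - 2 else h x)) := by
  classical
  intro S
  induction S using Finset.induction_on with
  | empty =>
    intro _
    have he : (fun x => if x ∈ (∅ : Finset (V d)) then h x - 2 else h x) = h := by
      funext x
      rw [if_neg (Finset.notMem_empty x)]
    rw [he]
    exact ⟨hh, Relation.ReflTransGen.refl⟩
  | @insert a₀ S ha₀ IH =>
    intro hmax
    obtain ⟨ih1, ih2⟩ := IH (fun x hx => hmax x (Finset.mem_insert_of_mem hx))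
    have hIsHt : IsHt (fun x => if x ∈ insert a₀ S then h x - 2 else h x) := by
      intro x y hxy
      have hstep := hh x y hxy
      simp only
      by_cases hx : x ∈ insert a₀ S <;> by_cases hy : y ∈ insert a₀ S
      · have h1 := hmax x hx
        have h2 := hmax y hy
        omega
      · have h1 := hmax x hx
        have h2 := hM y
        rw [if_pos hx, if_neg hy]
        omega
      · have h1 := hmax y hy
        have h2 := hM x
        rw [if_neg hx, if_pos hy]
        omega
      · rw [if_neg hx, if_neg hy]
        exact hstep
    refine ⟨hIsHt, ih2.tail ⟨colh_proper ih1, colh_proper hIsHt, a₀, fun w hw => ?_⟩⟩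
    rw [colh, colh]
    simp only [Finset.mem_insert, hw, false_or]

lemma descent : ∀ (n : ℕ) (h : V d → ℤ), IsHt h →
    (Finset.univ.sup' Finset.univ_nonempty h
      - Finset.univ.inf' Finset.univ_nonempty h).toNat ≤ n →
    ∃ (h' : V d → ℤ) (m : ℤ), IsHt h' ∧ (∀ x, h' x = m ∨ h' x = m + 1) ∧
      Relation.ReflTransGen (GlauberStep d) (colh h) (colh h') := by
  intro n
  induction n with
  | zero =>
    intro h hh hn
    refine ⟨h, Finset.univ.inf' Finset.univ_nonempty h, hh, fun x => ?_,
      Relation.ReflTransGen.refl⟩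
    have h1 := Finset.le_sup' h (Finset.mem_univ x)
    have h2 := Finset.inf'_le h (Finset.mem_univ x)
    omega
  | succ n IH =>
    intro h hh hn
    set M := Finset.univ.sup' Finset.univ_nonempty h with hMdef
    set m := Finset.univ.inf' Finset.univ_nonempty h with hmdef
    have hM : ∀ x, h x ≤ M := fun x => Finset.le_sup' h (Finset.mem_univ x)
    have hm : ∀ x, m ≤ h x := fun x => Finset.inf'_le h (Finset.mem_univ x)
    by_cases hle : M ≤ m + 1
    · refine ⟨h, m, hh, fun x => ?_, Relation.ReflTransGen.refl⟩
      have h1 := hM x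
      have h2 := hm x
      omega
    · push_neg at hle
      set S : Finset (V d) := Finset.univ.filter (fun x => h x = M) with hSdef
      obtain ⟨hg, hchain⟩ := lower_chain h hh M hM S
        (by intro x hx; simpa [hSdef] using hx)
      set g : V d → ℤ := fun x => if x ∈ S then h x - 2 else h x with hgdef
      have hgub : ∀ x, g x ≤ M - 1 := by
        intro x
        rw [hgdef]
        simp only
        by_cases hx : x ∈ S
        · have hxM : h x = M := by simpa [hSdef] using hx
          rw [if_pos hx]
          omega
        · rw [if_neg hx]
          have h1 := hM x
          have h2 : h x ≠ M := by simpa [hSdef] using hx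
          omega
      have hglb : ∀ x, m ≤ g x := by
        intro x
        rw [hgdef]
        simp only
        by_cases hx : x ∈ S
        · have hxM : h x = M := by simpa [hSdef] using hx
          rw [if_pos hx]
          omega
        · rw [if_neg hx]
          exact hm x
      have hmeas : (Finset.univ.sup' Finset.univ_nonempty g
          - Finset.univ.inf' Finset.univ_nonempty g).toNat ≤ n := by
        have hs : Finset.univ.sup' Finset.univ_nonempty g ≤ M - 1 :=
          Finset.sup'_le _ _ (fun x _ => hgub x)
        have hi : m ≤ Finset.univ.inf' Finset.univ_nonempty g :=
          Finset.le_inf' _ _ (fun x _ => hglb x)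
        omega
      obtain ⟨h', m', hh', hval', hchain'⟩ := IH g hg hmeas
      exact ⟨h', m', hh', hval', hchain.trans hchain'⟩

/-! ### main theorem -/

lemma glauber_symm : Symmetric (GlauberStep d) := by
  rintro f g ⟨p1, p2, v, hv⟩
  exact ⟨p2, p1, v, fun w hw => (hv w hw).symm⟩

lemma reach_twoCol (χ : V d → Fin 3) (hχ : ProperCol d χ) :
    ∃ a b : Fin 3, a ≠ b ∧
      Relation.ReflTransGen (GlauberStep d) χ (twoCol a b) := by
  have hht := isHt_ht χ hχ
  obtain ⟨h', m, hh', hval, hchain⟩ := descent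
    ((Finset.univ.sup' Finset.univ_nonempty (ht χ)
      - Finset.univ.inf' Finset.univ_nonempty (ht χ)).toNat) (ht χ) hht le_rfl
  obtain ⟨a, b, hab, he⟩ := colh_twoCol h' hh' m hval
  refine ⟨a, b, hab, ?_⟩
  rw [← he, ← colh_ht χ hχ]
  exact hchain

end Glauber

/-- Glauber dynamics on proper 3-colourings of `Q_d` is irreducible: any proper
3-colouring can be transformed into any other by single-vertex recolourings,
each intermediate colouring being proper. -/
theorem glauber_three_colourings_irreducible (d : ℕ) (hd : 1 ≤ d)
    (χ₁ χ₂ : (Fin d → Bool) → Fin 3)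
    (h₁ : ProperCol d χ₁) (h₂ : ProperCol d χ₂) :
    Relation.ReflTransGen (GlauberStep d) χ₁ χ₂ := by
  obtain ⟨a₁, b₁, hab₁, hc₁⟩ := Glauber.reach_twoCol χ₁ h₁
  obtain ⟨a₂, b₂, hab₂, hc₂⟩ := Glauber.reach_twoCol χ₂ h₂
  have mid := Glauber.twoCol_connect (d := d) a₁ b₁ a₂ b₂ hab₁ hab₂
  have back := (@Relation.ReflTransGen.symmetric _ _ ⟨fun _ _ h => Glauber.glauber_symm h⟩).symm _ _ hc₂
  exact (hc₁.trans mid).trans back
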